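/- arXiv:math/0603312 — 2 statements merged into one kernel-verified Lean document; each statement's English description precedes it below -/
import Mathlib

section
/- In ℤ[[t]], the formal power series F(t) = (t^3 + 7t^2 + 7t + 1) + t^2 · (2t^6 − 2t^5 + t^4 − t^2 + 2t − 2) · (t^7 − 1)⁻¹, where (t^7 − 1)⁻¹ = −∑_{k≥0} t^{7k}, satisfies: the coefficients of F at t^0, t^1, t^2, t^3 are 1, 7, 9, −1 respectively. In particular the coefficient at t^3 is negative. -/
open PowerSeries

/-- `(t^7 - 1)⁻¹ = -∑_{k≥0} t^{7k}` in `ℤ[[t]]`. -/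
noncomputable def invT7 : PowerSeries ℤ :=
  PowerSeries.mk fun n => if 7 ∣ n then (-1 : ℤ) else 0

/-- The stringy E-function (in `t = uv`) of a projective threefold with a unique
`E_6` singularity. -/
noncomputable def Fser : PowerSeries ℤ :=
  ((X : PowerSeries ℤ) ^ 3 + 7 * X ^ 2 + 7 * X + 1) +
    X ^ 2 * (2 * X ^ 6 - 2 * X ^ 5 + X ^ 4 - X ^ 2 + 2 * X - 2) * invT7

lemma part1 : ((X : PowerSeries ℤ) ^ 7 - 1) * invT7 = 1 := by
  ext n
  rw [sub_mul, one_mul, map_sub, coeff_X_pow_mul']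
  rcases Nat.lt_or_ge n 7 with h | h
  · simp only [if_neg (not_le.mpr h), invT7, coeff_mk, coeff_one]
    interval_cases n <;> norm_num
  · simp only [if_pos h, invT7, coeff_mk, coeff_one]
    have h7 : 7 ∣ n - 7 ↔ 7 ∣ n := by omega
    rw [if_congr h7 rfl rfl]
    have : n ≠ 0 := by omega
    simp [this]

lemma h7c (n k : ℕ) : PowerSeries.coeff n ((7:ℤ⟦X⟧) * X ^ k) = if n = k then 7 else 0 := by
  rw [show (7:ℤ⟦X⟧) = C 7 from (map_ofNat _ _).symm, coeff_C_mul, coeff_X_pow]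
  split <;> simp

lemma h2c (n k : ℕ) : PowerSeries.coeff n ((2:ℤ⟦X⟧) * X ^ k) = if n = k then 2 else 0 := by
  rw [show (2:ℤ⟦X⟧) = C 2 from (map_ofNat _ _).symm, coeff_C_mul, coeff_X_pow]
  split <;> simp

lemma h7n (n : ℕ) : PowerSeries.coeff n (7:ℤ⟦X⟧) = if n = 0 then 7 else 0 := by
  rw [show (7:ℤ⟦X⟧) = C 7 from (map_ofNat _ _).symm, coeff_C]

lemma coeffF (n : ℕ) (h : n ≤ 3) :
    PowerSeries.coeff n Fser = [1,7,9,-1][n]! := by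
  have hg : (X : PowerSeries ℤ) ^ 2 * (2 * X ^ 6 - 2 * X ^ 5 + X ^ 4 - X ^ 2 + 2 * X - 2)
    = 2*X^8 - 2*X^7 + X^6 - X^4 + 2*X^3 - 2*X^2 := by ring
  rw [Fser, hg, map_add, coeff_mul, Finset.Nat.sum_antidiagonal_eq_sum_range_succ_mk]
  interval_cases n <;>
    simp [Finset.sum_range_succ, invT7, coeff_X_pow, coeff_one, coeff_X, h7c, h2c, h7n]


/-- The coefficients of `F` at `t^0, t^1, t^2, t^3` are `1, 7, 9, -1`; in particular the
coefficient at `t^3` is negative.  (Here `(t^7-1)⁻¹` is indeed `-∑ t^{7k}`.) -/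
theorem stmt10 :
    ((X : PowerSeries ℤ) ^ 7 - 1) * invT7 = 1 ∧
    PowerSeries.coeff 0 Fser = 1 ∧
    PowerSeries.coeff 1 Fser = 7 ∧
    PowerSeries.coeff 2 Fser = 9 ∧
    PowerSeries.coeff 3 Fser = -1 ∧
    PowerSeries.coeff 3 Fser < 0 := by
  have h3 : PowerSeries.coeff 3 Fser = -1 := by simpa using coeffF 3 (by norm_num)
  exact ⟨part1, by simpa using coeffF 0 (by norm_num), by simpa using coeffF 1 (by norm_num),
    by simpa using coeffF 2 (by norm_num), h3, by rw [h3]; norm_num⟩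
end

section
/- Let T be a finite set, a : T → ℤ with a(i) ≥ 1, and for I ⊆ T let c^I : ℕ × ℕ → ℤ be given coefficient functions with c^∅ = c. In ℤ[[u,v]], expand E = ∑_{I⊆T} (∑_{p,q} c^I_{p,q} u^p v^q) · ∏_{i∈I} (uv − (uv)^{a(i)+1})/((uv)^{a(i)+1} − 1) as ∑ b_{i,j} u^i v^j. Fix d ≥ 4 and suppose a(l) > ⌊(d−4)/2⌋ for all l ∈ T, and that c^I_{p,q} = 0 whenever p + q > 2(d − |I|) (dimension bound). Then for all (i,j) with i ≥ j and i + j ≤ d: b_{i,j} = c_{i,j} + ∑_{k=1}^{j} (−1)^k ∑_{|J|=k} c^J_{i−k, j−k} + R_{i,j}, where R_{i,j} = ∑_{l : a(l) = d/2 − 1} c^{{l}}_{0,0} if d is even and i = j = d/2; R_{i,j} = ∑_{l : a(l) = (d−3)/2} c^{{l}}_{0,0} if d is odd and i = j = (d−1)/2; R_{i,j} = ∑_{l : a(l) = (d−3)/2} c^{{l}}_{1,0} if d is odd, i = (d+1)/2 and j = (d−1)/2; and R_{i,j} = 0 otherwise. -/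
/-- The element `uv` of `ℤ[[u,v]]`. -/
noncomputable def Uv : MvPowerSeries (Fin 2) ℤ :=
  MvPowerSeries.X 0 * MvPowerSeries.X 1

/-- The inverse `-∑_{k≥0} (uv)^{k(a+1)}` of `(uv)^(a+1) - 1` in `ℤ[[u,v]]`. -/
noncomputable def invUv (a : ℕ) : MvPowerSeries (Fin 2) ℤ :=
  fun e => if e 0 = e 1 ∧ (a + 1) ∣ e 0 then -1 else 0

/-- The two-variable power series `∑_{p,q} h p q · u^p v^q` attached to a
coefficient function `h`. -/
noncomputable def HDser (h : ℕ → ℕ → ℤ) : MvPowerSeries (Fin 2) ℤ :=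
  fun e => h (e 0) (e 1)

/-- pair (x,y) as a Finsupp on Fin 2 -/
noncomputable def pr (x y : ℕ) : Fin 2 →₀ ℕ :=
  Finsupp.single 0 x + Finsupp.single 1 y

@[simp] lemma pr_apply0 (x y : ℕ) : pr x y 0 = x := by
  simp [pr]

@[simp] lemma pr_apply1 (x y : ℕ) : pr x y 1 = y := by
  simp [pr, Finsupp.single_apply]

lemma fin2_ext {e f : Fin 2 →₀ ℕ} (h0 : e 0 = f 0) (h1 : e 1 = f 1) : e = f := by
  ext s
  fin_cases s <;> assumption

lemma eq_pr_iff {e : Fin 2 →₀ ℕ} {x y : ℕ} : e = pr x y ↔ e 0 = x ∧ e 1 = y := by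
  constructor
  · rintro rfl; simp
  · rintro ⟨h0, h1⟩; exact fin2_ext (by simpa) (by simpa)

@[simp] lemma pr_add (x y x' y' : ℕ) : pr x y + pr x' y' = pr (x + x') (y + y') := by
  apply fin2_ext <;> simp

/-- the diagonal embedding of one-variable series -/
noncomputable def Dg (g : PowerSeries ℤ) : MvPowerSeries (Fin 2) ℤ :=
  fun e => if e 0 = e 1 then PowerSeries.coeff (e 0) g else 0

lemma Dg_coeff (g : PowerSeries ℤ) (e : Fin 2 →₀ ℕ) :
    MvPowerSeries.coeff e (Dg g) = if e 0 = e 1 then PowerSeries.coeff (e 0) g else 0 := rfl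

lemma Dg_one : Dg 1 = 1 := by
  apply MvPowerSeries.ext
  intro e
  rw [Dg_coeff, MvPowerSeries.coeff_one]
  have he : e = 0 ↔ e 0 = 0 ∧ e 1 = 0 := by
    constructor
    · rintro rfl; simp
    · rintro ⟨h0, h1⟩; apply fin2_ext <;> simpa
  by_cases h : e 0 = e 1
  · rw [if_pos h, PowerSeries.coeff_one]
    by_cases h0 : e 0 = 0
    · rw [if_pos h0, if_pos (he.2 ⟨h0, h ▸ h0⟩)]
    · rw [if_neg h0, if_neg (fun hc => h0 (he.1 hc).1)]
  · rw [if_neg h, if_neg (fun hc => h (((he.1 hc).1).trans (he.1 hc).2.symm))]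

lemma Dg_mul (f g : PowerSeries ℤ) : Dg (f * g) = Dg f * Dg g := by
  apply MvPowerSeries.ext
  intro e
  rw [Dg_coeff, MvPowerSeries.coeff_mul]
  by_cases h : e 0 = e 1
  · rw [if_pos h, PowerSeries.coeff_mul]
    have hfil : ∑ p ∈ (Finset.HasAntidiagonal.antidiagonal e).filter
          (fun pq : (Fin 2 →₀ ℕ) × (Fin 2 →₀ ℕ) => pq.1 0 = pq.1 1),
          (MvPowerSeries.coeff p.1) (Dg f) * (MvPowerSeries.coeff p.2) (Dg g)
        = ∑ p ∈ Finset.HasAntidiagonal.antidiagonal e,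
          (MvPowerSeries.coeff p.1) (Dg f) * (MvPowerSeries.coeff p.2) (Dg g) := by
      apply Finset.sum_filter_of_ne
      intro x hx hne
      by_contra hd
      apply hne
      rw [Dg_coeff, if_neg hd, zero_mul]
    rw [← hfil]
    refine Finset.sum_nbij' (i := fun xy : ℕ × ℕ => ((pr xy.1 xy.1, pr xy.2 xy.2) : _ × _))
      (j := fun pq => (pq.1 0, pq.2 0)) ?_ ?_ ?_ ?_ ?_
    · intro x hx
      rw [Finset.HasAntidiagonal.mem_antidiagonal] at hx
      simp only [Finset.mem_filter, Finset.HasAntidiagonal.mem_antidiagonal]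
      refine ⟨?_, by simp⟩
      rw [pr_add, hx]
      exact fin2_ext (by simp) (by simp [h])
    · intro pq hpq
      simp only [Finset.mem_filter, Finset.HasAntidiagonal.mem_antidiagonal] at hpq
      obtain ⟨hsum, hdiag⟩ := hpq
      rw [Finset.HasAntidiagonal.mem_antidiagonal]
      have h0 : pq.1 0 + pq.2 0 = e 0 := by rw [← hsum]; simp
      rw [h0]
    · intro x hx; simp
    · intro pq hpq
      simp only [Finset.mem_filter, Finset.HasAntidiagonal.mem_antidiagonal] at hpq
      obtain ⟨hsum, hdiag⟩ := hpq
      have h0 : pq.1 0 + pq.2 0 = e 0 := by rw [← hsum]; simp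
      have h1 : pq.1 1 + pq.2 1 = e 1 := by rw [← hsum]; simp
      have hq : pq.2 0 = pq.2 1 := by omega
      refine Prod.ext (fin2_ext (by simp) (by simp [hdiag])) (fin2_ext (by simp) (by simp [hq]))
    · intro x hx
      rw [Finset.HasAntidiagonal.mem_antidiagonal] at hx
      rw [Dg_coeff, Dg_coeff]
      simp
  · rw [if_neg h]
    symm
    apply Finset.sum_eq_zero
    intro x hx
    rw [Finset.HasAntidiagonal.mem_antidiagonal] at hx
    rw [Dg_coeff, Dg_coeff]
    by_cases h1 : x.1 0 = x.1 1
    · by_cases h2 : x.2 0 = x.2 1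
      · exfalso
        apply h
        have e0 : x.1 0 + x.2 0 = e 0 := by rw [← hx]; simp
        have e1 : x.1 1 + x.2 1 = e 1 := by rw [← hx]; simp
        omega
      · rw [if_neg h2, mul_zero]
    · rw [if_neg h1, zero_mul]

lemma Dg_prod {α : Type*} [DecidableEq α] (s : Finset α) (g : α → PowerSeries ℤ) :
    Dg (∏ l ∈ s, g l) = ∏ l ∈ s, Dg (g l) := by
  induction s using Finset.induction_on with
  | empty => simpa using Dg_one
  | insert _ _ hns ih =>
    rw [Finset.prod_insert hns, Finset.prod_insert hns, Dg_mul, ih]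

lemma Uv_eq : Uv = Dg PowerSeries.X := by
  apply MvPowerSeries.ext
  intro e
  rw [Dg_coeff, PowerSeries.coeff_X]
  have : Uv = MvPowerSeries.monomial (pr 1 1) 1 := by
    rw [Uv, MvPowerSeries.X_def, MvPowerSeries.X_def, MvPowerSeries.monomial_mul_monomial]
    norm_num
    rfl
  rw [this, MvPowerSeries.coeff_monomial]
  by_cases hd : e 0 = e 1
  · by_cases h1 : e 0 = 1
    · rw [if_pos (eq_pr_iff.2 ⟨h1, hd ▸ h1⟩), if_pos hd, if_pos h1]
    · rw [if_neg (fun hc => h1 (eq_pr_iff.1 hc).1), if_pos hd, if_neg h1]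
  · rw [if_neg (fun hc => hd ((eq_pr_iff.1 hc).1.trans (eq_pr_iff.1 hc).2.symm)), if_neg hd]

noncomputable def ia (a : ℕ) : PowerSeries ℤ :=
  PowerSeries.mk fun n => if (a + 1) ∣ n then -1 else 0

lemma invUv_eq (a : ℕ) : invUv a = Dg (ia a) := by
  funext e
  show (if e 0 = e 1 ∧ (a + 1) ∣ e 0 then (-1 : ℤ) else 0) = _
  show _ = if e 0 = e 1 then PowerSeries.coeff (e 0) (ia a) else 0
  rw [ia, PowerSeries.coeff_mk]
  split_ifs with h1 h2 h3 <;> tauto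

noncomputable def fa (a : ℕ) : PowerSeries ℤ :=
  (PowerSeries.X - PowerSeries.X ^ (a + 1)) * ia a

lemma Dg_sub (f g : PowerSeries ℤ) : Dg (f - g) = Dg f - Dg g := by
  apply MvPowerSeries.ext
  intro e
  rw [map_sub, Dg_coeff, Dg_coeff, Dg_coeff, map_sub]
  split_ifs <;> simp

lemma Dg_pow (f : PowerSeries ℤ) (n : ℕ) : Dg (f ^ n) = Dg f ^ n := by
  induction n with
  | zero => simpa using Dg_one
  | succ n ih => rw [pow_succ, pow_succ, Dg_mul, ih]

lemma factor_eq (a : ℕ) : (Uv - Uv ^ (a + 1)) * invUv a = Dg (fa a) := by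
  rw [fa, Dg_mul, ← invUv_eq, Dg_sub, Dg_pow, ← Uv_eq]

lemma fa_coeff (a n : ℕ) (ha : 1 ≤ a) (hn : n ≤ a + 1) :
    PowerSeries.coeff n (fa a) = if n = 1 then -1 else if n = a + 1 then 1 else 0 := by
  rw [fa, sub_mul, map_sub]
  have hX : (PowerSeries.X : PowerSeries ℤ) = PowerSeries.X ^ 1 := (pow_one _).symm
  rw [PowerSeries.coeff_X_pow_mul', hX, PowerSeries.coeff_X_pow_mul']
  rw [ia]
  simp only [PowerSeries.coeff_mk]
  have e1 : (a + 1) ∣ (n - 1) ↔ n ≤ 1 := by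
    constructor
    · intro hd
      by_contra hgt
      have h1 : 1 ≤ n - 1 := by omega
      have := Nat.le_of_dvd h1 hd
      omega
    · intro h
      have h0 : n - 1 = 0 := by omega
      rw [h0]
      exact dvd_zero _
  have e2 : n - (a + 1) = 0 := by omega
  simp only [e1, e2, dvd_zero, if_true]
  split_ifs <;> omega

lemma prod_coeff {T : Type*} [DecidableEq T] (a : T → ℕ) (D : ℕ) (hD : 2 ≤ D)
    (ha1 : ∀ l, 1 ≤ a l) (haD : ∀ l, D ≤ a l + 1) (I : Finset T) (m : ℕ) (hm : m ≤ D) :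
    PowerSeries.coeff m (∏ l ∈ I, fa (a l)) =
      (if m = I.card then (-1 : ℤ) ^ m else 0)
      + (if m = D ∧ I.card = 1 then ∑ l ∈ I, (if a l + 1 = D then (1 : ℤ) else 0) else 0) := by
  induction I using Finset.induction_on generalizing m with
  | empty =>
    simp only [Finset.prod_empty, Finset.card_empty, PowerSeries.coeff_one]
    split_ifs <;> simp_all <;> omega
  | insert l0 I hl0 ih =>
    rw [Finset.prod_insert hl0, PowerSeries.coeff_mul,
      Finset.Nat.sum_antidiagonal_eq_sum_range_succ_mk]
    have hterm : ∀ x ∈ Finset.range (m + 1),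
        PowerSeries.coeff x (fa (a l0)) * PowerSeries.coeff (m - x) (∏ l ∈ I, fa (a l))
        = (if x = 1 then -PowerSeries.coeff (m - 1) (∏ l ∈ I, fa (a l)) else 0)
          + (if x = a l0 + 1 then PowerSeries.coeff (m - x) (∏ l ∈ I, fa (a l)) else 0) := by
      intro x hx
      rw [Finset.mem_range] at hx
      rw [fa_coeff (a l0) x (ha1 l0) (by have := haD l0; omega)]
      have hne : (1 : ℕ) ≠ a l0 + 1 := by have := ha1 l0; omega
      split_ifs with h1 h2 h3 <;> simp_all <;> ring
    rw [Finset.sum_congr rfl hterm, Finset.sum_add_distrib,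
      Finset.sum_ite_eq' (Finset.range (m + 1)) 1
        (fun _ => -PowerSeries.coeff (m - 1) (∏ l ∈ I, fa (a l))),
      Finset.sum_ite_eq' (Finset.range (m + 1)) (a l0 + 1)
        (fun x => PowerSeries.coeff (m - x) (∏ l ∈ I, fa (a l)))]
    simp only [Finset.mem_range]
    have hfirst : (if 1 < m + 1 then -PowerSeries.coeff (m - 1) (∏ l ∈ I, fa (a l)) else 0)
        = (if m = I.card + 1 then (-1 : ℤ) ^ m else 0) := by
      by_cases h1 : 1 ≤ m
      · rw [if_pos (by omega), ih (m - 1) (by omega)]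
        rw [if_neg (by omega : ¬ (m - 1 = D ∧ I.card = 1)), add_zero]
        by_cases hc : m - 1 = I.card
        · rw [if_pos hc, if_pos (by omega)]
          conv_rhs => rw [show m = (m - 1) + 1 by omega]
          rw [pow_succ]
          ring
        · rw [if_neg hc, if_neg (by omega), neg_zero]
      · rw [if_neg (by omega), if_neg (by omega)]
    have hsecond : (if a l0 + 1 < m + 1
          then PowerSeries.coeff (m - (a l0 + 1)) (∏ l ∈ I, fa (a l)) else 0)
        = (if m = D ∧ (insert l0 I).card = 1
            then ∑ l ∈ insert l0 I, (if a l + 1 = D then (1 : ℤ) else 0) else 0) := by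
      rw [Finset.card_insert_of_notMem hl0]
      by_cases hc : a l0 + 1 ≤ m
      · have hmD : m = D := by have := haD l0; omega
        have haD0 : a l0 + 1 = D := by have := haD l0; omega
        have h0 : m - (a l0 + 1) = 0 := by omega
        rw [if_pos (by omega), h0, ih 0 (by omega)]
        rw [if_neg (by omega : ¬ (0 = D ∧ I.card = 1)), add_zero]
        by_cases hI : I.card = 0
        · have hIe : I = ∅ := Finset.card_eq_zero.1 hI
          subst hIe
          rw [if_pos (by omega), if_pos (by simp [hmD]), Finset.sum_insert (Finset.notMem_empty l0),
            Finset.sum_empty, if_pos haD0]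
          norm_num
        · rw [if_neg (by omega), if_neg (by omega)]
      · rw [if_neg (by omega)]
        by_cases hI : I.card = 0
        · have hIe : I = ∅ := Finset.card_eq_zero.1 hI
          subst hIe
          by_cases hmD : m = D
          · rw [if_pos (by simp [hmD]), Finset.sum_insert (Finset.notMem_empty l0),
              Finset.sum_empty, if_neg (by have := haD l0; omega)]
            norm_num
          · rw [if_neg (by simp [hmD])]
        · rw [if_neg (by omega)]
    rw [hfirst, hsecond, Finset.card_insert_of_notMem hl0]

lemma HD_coeff (h : ℕ → ℕ → ℤ) (e : Fin 2 →₀ ℕ) :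
    MvPowerSeries.coeff e (HDser h) = h (e 0) (e 1) := rfl

lemma coeff_HD_mul (h : ℕ → ℕ → ℤ) (g : PowerSeries ℤ) (i j : ℕ) (hji : j ≤ i) :
    MvPowerSeries.coeff (pr i j) (HDser h * Dg g)
    = ∑ m ∈ Finset.range (j + 1), h (i - m) (j - m) * PowerSeries.coeff m g := by
  rw [MvPowerSeries.coeff_mul]
  have hfil : ∑ p ∈ (Finset.HasAntidiagonal.antidiagonal (pr i j)).filter
        (fun pq : (Fin 2 →₀ ℕ) × (Fin 2 →₀ ℕ) => pq.2 0 = pq.2 1),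
        (MvPowerSeries.coeff p.1) (HDser h) * (MvPowerSeries.coeff p.2) (Dg g)
      = ∑ p ∈ Finset.HasAntidiagonal.antidiagonal (pr i j),
        (MvPowerSeries.coeff p.1) (HDser h) * (MvPowerSeries.coeff p.2) (Dg g) := by
    apply Finset.sum_filter_of_ne
    intro x hx hne
    by_contra hd
    apply hne
    rw [Dg_coeff, if_neg hd, mul_zero]
  rw [← hfil]
  refine (Finset.sum_nbij' (i := fun pq : (Fin 2 →₀ ℕ) × (Fin 2 →₀ ℕ) => pq.2 0)
    (j := fun m => ((pr (i - m) (j - m), pr m m) : _ × _)) ?_ ?_ ?_ ?_ ?_)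
  · intro pq hpq
    simp only [Finset.mem_filter, Finset.HasAntidiagonal.mem_antidiagonal] at hpq
    obtain ⟨hsum, hdiag⟩ := hpq
    have h1 : pq.1 1 + pq.2 1 = j := by
      have := congrArg (fun e => e 1) hsum
      simpa using this
    simp only [Finset.mem_range]
    omega
  · intro m hm
    rw [Finset.mem_range] at hm
    simp only [Finset.mem_filter, Finset.HasAntidiagonal.mem_antidiagonal]
    refine ⟨?_, by simp⟩
    rw [pr_add]
    congr 1 <;> omega
  · intro pq hpq
    simp only [Finset.mem_filter, Finset.HasAntidiagonal.mem_antidiagonal] at hpq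
    obtain ⟨hsum, hdiag⟩ := hpq
    have h0 : pq.1 0 + pq.2 0 = i := by
      have := congrArg (fun e => e 0) hsum
      simpa using this
    have h1 : pq.1 1 + pq.2 1 = j := by
      have := congrArg (fun e => e 1) hsum
      simpa using this
    refine Prod.ext (fin2_ext ?_ ?_) (fin2_ext ?_ ?_) <;> simp <;> omega
  · intro m hm
    simp
  · intro pq hpq
    simp only [Finset.mem_filter, Finset.HasAntidiagonal.mem_antidiagonal] at hpq
    obtain ⟨hsum, hdiag⟩ := hpq
    have h0 : pq.1 0 + pq.2 0 = i := by
      have := congrArg (fun e => e 0) hsum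
      simpa using this
    have h1 : pq.1 1 + pq.2 1 = j := by
      have := congrArg (fun e => e 1) hsum
      simpa using this
    rw [HD_coeff, Dg_coeff, if_pos hdiag]
    have e0 : pq.1 0 = i - pq.2 0 := by omega
    have e1 : pq.1 1 = j - pq.2 0 := by omega
    rw [e0, e1]

/-- Coefficient extraction in the proof of Theorem 3.1: the low-degree coefficients
`b_{i,j}` (for `i ≥ j`, `i + j ≤ d`) of
`E = ∑_{I⊆T} (∑ c^I_{p,q} u^p v^q) ∏_{l∈I} (uv - (uv)^(a l + 1))/((uv)^(a l + 1) - 1)`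
are `c_{i,j} + ∑_{k=1}^j (-1)^k ∑_{|J|=k} c^J_{i-k,j-k} + R_{i,j}`, provided all
`a l > ⌊(d-4)/2⌋` and the `c^I` satisfy the dimension bound. -/
theorem stmt13 {T : Type*} [Fintype T] [DecidableEq T] (d : ℕ) (hd : 4 ≤ d)
    (a : T → ℕ) (ha1 : ∀ l, 1 ≤ a l) (ha : ∀ l, (d - 4) / 2 < a l)
    (c : Finset T → ℕ → ℕ → ℤ)
    (hdim : ∀ (I : Finset T) (p q : ℕ), 2 * (d - I.card) < p + q → c I p q = 0)
    (i j : ℕ) (hji : j ≤ i) (hij : i + j ≤ d) :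
    MvPowerSeries.coeff (R := ℤ) (Finsupp.single 0 i + Finsupp.single 1 j)
      (∑ I : Finset T, HDser (c I) *
        ∏ l ∈ I, (Uv - Uv ^ (a l + 1)) * invUv (a l))
    = c ∅ i j
      + (∑ k ∈ Finset.Icc 1 j, (-1 : ℤ) ^ k *
          ∑ J ∈ Finset.univ.powerset.filter (fun J : Finset T => J.card = k),
            c J (i - k) (j - k))
      + (if d % 2 = 0 ∧ i = d / 2 ∧ j = d / 2 then
            ∑ l ∈ Finset.univ.filter (fun l => a l = d / 2 - 1), c {l} 0 0
          else if d % 2 = 1 ∧ i = (d - 1) / 2 ∧ j = (d - 1) / 2 then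
            ∑ l ∈ Finset.univ.filter (fun l => a l = (d - 3) / 2), c {l} 0 0
          else if d % 2 = 1 ∧ i = (d + 1) / 2 ∧ j = (d - 1) / 2 then
            ∑ l ∈ Finset.univ.filter (fun l => a l = (d - 3) / 2), c {l} 1 0
          else 0) := by
  classical
  set D := d / 2 with hDdef
  have hD2 : 2 ≤ D := by omega
  have haD : ∀ l, D ≤ a l + 1 := fun l => by have := ha l; omega
  have hjD : j ≤ D := by omega
  have hμ : (Finsupp.single 0 i + Finsupp.single 1 j : Fin 2 →₀ ℕ) = pr i j := rfl
  rw [hμ, map_sum]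
  have hIcoeff : ∀ I : Finset T,
      MvPowerSeries.coeff (pr i j)
        (HDser (c I) * ∏ l ∈ I, (Uv - Uv ^ (a l + 1)) * invUv (a l))
      = (if I.card ≤ j then (-1 : ℤ) ^ I.card * c I (i - I.card) (j - I.card) else 0)
        + (if j = D ∧ I.card = 1
            then c I (i - D) (j - D) * ∑ l ∈ I, (if a l + 1 = D then (1 : ℤ) else 0)
            else 0) := by
    intro I
    have hprod : (∏ l ∈ I, (Uv - Uv ^ (a l + 1)) * invUv (a l)) = Dg (∏ l ∈ I, fa (a l)) := by
      rw [Dg_prod]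
      exact Finset.prod_congr rfl fun l _ => factor_eq (a l)
    rw [hprod, coeff_HD_mul _ _ i j hji]
    have hterm : ∀ m ∈ Finset.range (j + 1),
        c I (i - m) (j - m) * PowerSeries.coeff m (∏ l ∈ I, fa (a l))
        = (if m = I.card then (-1 : ℤ) ^ m * c I (i - m) (j - m) else 0)
          + (if m = D ∧ I.card = 1
              then c I (i - m) (j - m) * ∑ l ∈ I, (if a l + 1 = D then (1 : ℤ) else 0)
              else 0) := by
      intro m hm
      rw [Finset.mem_range] at hm
      rw [prod_coeff a D hD2 ha1 haD I m (by omega)]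
      rw [mul_add]
      congr 1
      · split_ifs <;> ring
      · split_ifs <;> ring
    rw [Finset.sum_congr rfl hterm, Finset.sum_add_distrib]
    congr 1
    · rw [Finset.sum_ite_eq' (Finset.range (j + 1)) I.card
        (fun m => (-1 : ℤ) ^ m * c I (i - m) (j - m))]
      simp only [Finset.mem_range]
      split_ifs with h1 h2 h3 <;> first | rfl | omega
    · by_cases hc : I.card = 1
      · simp only [hc, and_true]
        rw [Finset.sum_ite_eq' (Finset.range (j + 1)) D
          (fun m => c I (i - m) (j - m) * ∑ l ∈ I, (if a l + 1 = D then (1 : ℤ) else 0))]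
        simp only [Finset.mem_range]
        split_ifs with h1 h2 h3 <;> first | rfl | omega
      · rw [if_neg (by tauto)]
        apply Finset.sum_eq_zero
        intro m _
        rw [if_neg (by tauto)]
  rw [Finset.sum_congr rfl (fun I _ => hIcoeff I), Finset.sum_add_distrib]
  congr 1
  · -- main part
    rw [Finset.powerset_univ]
    have step1 : ∀ k ∈ Finset.Icc 1 j,
        (-1 : ℤ) ^ k * ∑ J ∈ Finset.univ.filter (fun J : Finset T => J.card = k),
            c J (i - k) (j - k)
        = ∑ J ∈ Finset.univ.filter (fun J : Finset T => J.card = k),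
            (-1 : ℤ) ^ J.card * c J (i - J.card) (j - J.card) := by
      intro k _
      rw [Finset.mul_sum]
      apply Finset.sum_congr rfl
      intro J hJ
      rw [Finset.mem_filter] at hJ
      rw [hJ.2]
    rw [Finset.sum_congr rfl step1,
      Finset.sum_fiberwise_eq_sum_filter (Finset.univ : Finset (Finset T)) (Finset.Icc 1 j)
        (fun J => J.card) (fun J => (-1 : ℤ) ^ J.card * c J (i - J.card) (j - J.card)),
      Finset.sum_filter]
    have hempty : c ∅ i j
        = ∑ J : Finset T, (if J = ∅ then c ∅ i j else 0) := by
      rw [Finset.sum_ite_eq' Finset.univ (∅ : Finset T) (fun _ => c ∅ i j),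
        if_pos (Finset.mem_univ _)]
    rw [hempty, ← Finset.sum_add_distrib]
    apply Finset.sum_congr rfl
    intro J _
    simp only [Finset.mem_Icc]
    by_cases hJ : J = ∅
    · subst hJ
      simp
    · have hJc : 1 ≤ J.card := by
        rcases Nat.eq_zero_or_pos J.card with h | h
        · exact absurd (Finset.card_eq_zero.1 h) hJ
        · exact h
      rw [if_neg hJ]
      by_cases hle : J.card ≤ j
      · rw [if_pos hle, if_pos ⟨hJc, hle⟩]
        ring
      · rw [if_neg hle, if_neg (by omega)]
        ring
  · -- remainder part
    by_cases hj : j = D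
    · have hBval : (∑ I : Finset T,
          if j = D ∧ I.card = 1
            then c I (i - D) (j - D) * ∑ l ∈ I, (if a l + 1 = D then (1 : ℤ) else 0)
            else 0)
          = ∑ l ∈ Finset.univ.filter (fun l => a l + 1 = D), c {l} (i - D) 0 := by
        have hstep : ∀ I : Finset T,
            (if j = D ∧ I.card = 1
              then c I (i - D) (j - D) * ∑ l ∈ I, (if a l + 1 = D then (1 : ℤ) else 0)
              else 0)
            = (if I.card = 1
              then c I (i - D) 0 * ∑ l ∈ I, (if a l + 1 = D then (1 : ℤ) else 0)
              else 0) := by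
          intro I
          have hz : j - D = 0 := by omega
          rw [hz]
          split_ifs with h1 h2 h3 <;> first | rfl | tauto
        rw [Finset.sum_congr rfl fun I _ => hstep I, ← Finset.sum_filter]
        have hbij : ∑ I ∈ Finset.univ.filter (fun I : Finset T => I.card = 1),
              c I (i - D) 0 * ∑ l ∈ I, (if a l + 1 = D then (1 : ℤ) else 0)
            = ∑ l : T, c {l} (i - D) 0 *
                ∑ m ∈ ({l} : Finset T), (if a m + 1 = D then (1 : ℤ) else 0) := by
          symm
          refine Finset.sum_bij (i := fun l _ => ({l} : Finset T)) ?_ ?_ ?_ ?_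
          · intro l _
            simp
          · intro l1 _ l2 _ h
            exact Finset.singleton_injective h
          · intro I hI
            rw [Finset.mem_filter] at hI
            obtain ⟨l, hl⟩ := Finset.card_eq_one.1 hI.2
            exact ⟨l, Finset.mem_univ l, hl.symm⟩
          · intro l _
            rfl
        rw [hbij]
        have hl2 : ∀ l : T, c {l} (i - D) 0 *
              ∑ m ∈ ({l} : Finset T), (if a m + 1 = D then (1 : ℤ) else 0)
            = (if a l + 1 = D then c {l} (i - D) 0 else 0) := by
          intro l
          rw [Finset.sum_singleton]
          split_ifs <;> ring
        rw [Finset.sum_congr rfl fun l _ => hl2 l, ← Finset.sum_filter]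
      rw [hBval]
      by_cases hpar : d % 2 = 0
      · rw [if_pos ⟨hpar, by omega, by omega⟩]
        rw [show i - D = 0 by omega]
        apply Finset.sum_congr
        · apply Finset.filter_congr
          intro l _
          constructor <;> intro h <;> omega
        · intro l _
          rfl
      · by_cases hiD : i = D
        · rw [if_neg (by rintro ⟨h1, h2, h3⟩; omega), if_pos ⟨by omega, by omega, by omega⟩]
          rw [show i - D = 0 by omega]
          apply Finset.sum_congr
          · apply Finset.filter_congr
            intro l _
            constructor <;> intro h <;> omega
          · intro l _
            rfl
        · rw [if_neg (by rintro ⟨h1, h2, h3⟩; omega), if_neg (by rintro ⟨h1, h2, h3⟩; omega),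
            if_pos ⟨by omega, by omega, by omega⟩]
          rw [show i - D = 1 by omega]
          apply Finset.sum_congr
          · apply Finset.filter_congr
            intro l _
            constructor <;> intro h <;> omega
          · intro l _
            rfl
    · rw [if_neg (by rintro ⟨h1, h2, h3⟩; omega),
        if_neg (by rintro ⟨h1, h2, h3⟩; omega),
        if_neg (by rintro ⟨h1, h2, h3⟩; omega)]
      apply Finset.sum_eq_zero
      intro I _
      rw [if_neg (by tauto)]
end
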